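/- A combinatorial counting lemma for unions of matchings: let M and N be matchings on the same bipartite vertex set of men and women, and consider the multigraph G whose edge multiset is the disjoint union of M and N (so each pair in both M and N contributes two parallel edges, forming a cycle of length two). If (i) no connected component of G consists of a single N-edge, and (ii) no connected component of G is a path of length three whose two end edges belong to N and whose middle edge belongs to M, then |N| ≤ (3/2)·|M|. -/

import Mathlib

/-- An instance of the stable marriage problem with ties and incomplete lists (SMTI),
with men of type `α` and women of type `β`.  Each person's preference list is
represented by a rank function: `mpref m w = none` means woman `w` is unacceptable
to man `m`, and `mpref m w = some r` means `w` is acceptable with rank `r`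
(smaller rank = more preferred; equal ranks = a tie).  This encodes exactly a
total preorder on the set of acceptable partners. -/
structure SMInst (α β : Type) where
  mpref : α → β → Option ℕ
  wpref : β → α → Option ℕ

namespace SMInst

variable {α β : Type}

/-- Woman `w` is acceptable to man `m`. -/
def mAcc (I : SMInst α β) (m : α) (w : β) : Prop := (I.mpref m w).isSome

/-- Man `m` is acceptable to woman `w`. -/
def wAcc (I : SMInst α β) (w : β) (m : α) : Prop := (I.wpref w m).isSome

/-- Man `m` strictly prefers woman `w` to woman `w'`. -/
def mPref (I : SMInst α β) (m : α) (w w' : β) : Prop :=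
  ∃ r r', I.mpref m w = some r ∧ I.mpref m w' = some r' ∧ r < r'

/-- Woman `w` strictly prefers man `m` to man `m'`. -/
def wPref (I : SMInst α β) (w : β) (m m' : α) : Prop :=
  ∃ r r', I.wpref w m = some r ∧ I.wpref w m' = some r' ∧ r < r'

/-- `M` is a matching of `I`: all pairs mutually acceptable and no person in two pairs. -/
def IsMatching (I : SMInst α β) (M : Finset (α × β)) : Prop :=
  (∀ p ∈ M, I.mAcc p.1 p.2 ∧ I.wAcc p.2 p.1) ∧
  (∀ p ∈ M, ∀ q ∈ M, p.1 = q.1 → p = q) ∧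
  (∀ p ∈ M, ∀ q ∈ M, p.2 = q.2 → p = q)

/-- Man `m` is single (unmatched) in `M`. -/
def mSingle (M : Finset (α × β)) (m : α) : Prop := ∀ w, (m, w) ∉ M

/-- Woman `w` is single (unmatched) in `M`. -/
def wSingle (M : Finset (α × β)) (w : β) : Prop := ∀ m, (m, w) ∉ M

/-- `(m, w)` blocks `M` in instance `I`. -/
def Blocks (I : SMInst α β) (M : Finset (α × β)) (m : α) (w : β) : Prop :=
  I.mAcc m w ∧ I.wAcc w m ∧
  (mSingle M m ∨ ∃ w', (m, w') ∈ M ∧ I.mPref m w w') ∧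
  (wSingle M w ∨ ∃ m', (m', w) ∈ M ∧ I.wPref w m m')

/-- `M` is a (weakly) stable matching of `I`. -/
def IsStable (I : SMInst α β) (M : Finset (α × β)) : Prop :=
  I.IsMatching M ∧ ∀ m w, ¬ I.Blocks M m w

/-- Man `m` prefers matching `M'` to matching `M`, with respect to his list in `I`:
he is matched in `M'` to an acceptable partner, and he is either single in `M`
or strictly prefers his `M'`-partner to his `M`-partner. -/
def mPrefMatching (I : SMInst α β) (m : α) (M' M : Finset (α × β)) : Prop :=
  ∃ w, (m, w) ∈ M' ∧ I.mAcc m w ∧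
    (mSingle M m ∨ ∃ w', (m, w') ∈ M ∧ I.mPref m w w')

/-- Woman `w` prefers matching `M'` to matching `M`, with respect to her list in `I`. -/
def wPrefMatching (I : SMInst α β) (w : β) (M' M : Finset (α × β)) : Prop :=
  ∃ m, (m, w) ∈ M' ∧ I.wAcc w m ∧
    (wSingle M w ∨ ∃ m', (m', w) ∈ M ∧ I.wPref w m m')

/-- `I` and `I'` differ only in man `m`'s preference list. -/
def mDiffOnly (I I' : SMInst α β) (m : α) : Prop :=
  I.wpref = I'.wpref ∧ ∀ m', m' ≠ m → I.mpref m' = I'.mpref m'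

/-- `I` and `I'` differ only in woman `w`'s preference list. -/
def wDiffOnly (I I' : SMInst α β) (w : β) : Prop :=
  I.mpref = I'.mpref ∧ ∀ w', w' ≠ w → I.wpref w' = I'.wpref w'

/-- Men's lists contain no ties. -/
def MStrict (I : SMInst α β) : Prop :=
  ∀ m w w', I.mpref m w = I.mpref m w' → I.mAcc m w → w = w'

/-- Women's lists contain no ties. -/
def WStrict (I : SMInst α β) : Prop :=
  ∀ w m m', I.wpref w m = I.wpref w m' → I.wAcc w m → m = m'

/-- `I` is an SMI instance: no ties at all (all lists strictly ordered). -/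
def NoTies (I : SMInst α β) : Prop := I.MStrict ∧ I.WStrict

/-- `I` is an SMTI-1TM instance: ties may occur only in men's lists,
i.e. women's lists are strictly ordered. -/
def OneTM (I : SMInst α β) : Prop := I.WStrict

/-- `I'` is obtained from `I` by breaking ties: same acceptable sets, and every
strict preference of `I` is preserved in `I'` (so each person's list in `I'` is a
linear extension of the corresponding total preorder in `I`). -/
def Refines (I I' : SMInst α β) : Prop :=
  (∀ m w, I.mAcc m w ↔ I'.mAcc m w) ∧
  (∀ w m, I.wAcc w m ↔ I'.wAcc w m) ∧
  (∀ m w w', I.mPref m w w' → I'.mPref m w w') ∧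
  (∀ w m m', I.wPref w m m' → I'.wPref w m m')

end SMInst

/-- Counting lemma for unions of matchings: if `M` and `N` are matchings on the same
bipartite vertex set such that (i) no connected component of the multigraph `M ⊎ N`
is a single `N`-edge (i.e. every `N`-pair has an endpoint matched in `M`), and
(ii) no connected component is a length-three path whose end edges are `N`-edges and
whose middle edge is an `M`-edge, then `|N| ≤ (3/2)·|M|`. -/
theorem union_of_matchings_counting {α β : Type} (M N : Finset (α × β))
    (hM1 : ∀ p ∈ M, ∀ q ∈ M, p.1 = q.1 → p = q)
    (hM2 : ∀ p ∈ M, ∀ q ∈ M, p.2 = q.2 → p = q)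
    (hN1 : ∀ p ∈ N, ∀ q ∈ N, p.1 = q.1 → p = q)
    (hN2 : ∀ p ∈ N, ∀ q ∈ N, p.2 = q.2 → p = q)
    (hsingle : ∀ p ∈ N, (∃ w', (p.1, w') ∈ M) ∨ (∃ m', (m', p.2) ∈ M))
    (hpath : ¬ ∃ (mi mk : α) (wj wl : β),
        (mi, wj) ∈ N ∧ (mk, wl) ∈ N ∧ (mk, wj) ∈ M ∧
        (∀ w, (mi, w) ∉ M) ∧ (∀ m, (m, wl) ∉ M)) :
    2 * N.card ≤ 3 * M.card := by
  classical
  set P : α × β → Prop := fun p => ∃ w', (p.1, w') ∈ M with hPdef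
  set Q : α × β → Prop := fun p => ∃ m', (m', p.2) ∈ M with hQdef
  -- Injection 1: N-edges with matched man into M
  have hA : (N.filter P).card ≤ M.card := by
    apply Finset.card_le_card_of_injOn
      (fun p => if h : P p then (p.1, h.choose) else p)
    · intro p hp
      rw [Finset.mem_coe, Finset.mem_filter] at hp
      beta_reduce
      rw [dif_pos hp.2]
      exact hp.2.choose_spec
    · intro p hp q hq hpq
      rw [Finset.mem_coe, Finset.mem_filter] at hp hq
      simp only [dif_pos hp.2, dif_pos hq.2] at hpq
      exact hN1 p hp.1 q hq.1 ((Prod.ext_iff.mp hpq).1)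
  -- Injection 2: N-edges with matched woman into M
  have hB : (N.filter Q).card ≤ M.card := by
    apply Finset.card_le_card_of_injOn
      (fun p => if h : Q p then (h.choose, p.2) else p)
    · intro p hp
      rw [Finset.mem_coe, Finset.mem_filter] at hp
      beta_reduce
      rw [dif_pos hp.2]
      exact hp.2.choose_spec
    · intro p hp q hq hpq
      rw [Finset.mem_coe, Finset.mem_filter] at hp hq
      simp only [dif_pos hp.2, dif_pos hq.2] at hpq
      exact hN2 p hp.1 q hq.1 ((Prod.ext_iff.mp hpq).2)
  -- Injection 3: N-edges with exactly one matched endpoint into M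
  have hC : (N.filter fun p => ¬ (P p ∧ Q p)).card ≤ M.card := by
    apply Finset.card_le_card_of_injOn
      (fun p => if h : P p then (p.1, h.choose)
        else if h' : Q p then (h'.choose, p.2) else p)
    · intro p hp
      rw [Finset.mem_coe, Finset.mem_filter] at hp
      beta_reduce
      rcases hsingle p hp.1 with h | h'
      · rw [dif_pos h]; exact h.choose_spec
      · by_cases h : P p
        · rw [dif_pos h]; exact h.choose_spec
        · rw [dif_neg h, dif_pos h']; exact h'.choose_spec
    · intro p hp q hq hpq
      rw [Finset.mem_coe, Finset.mem_filter] at hp hq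
      by_cases h1 : P p <;> by_cases h2 : P q
      · simp only [dif_pos h1, dif_pos h2] at hpq
        exact hN1 p hp.1 q hq.1 ((Prod.ext_iff.mp hpq).1)
      · -- p via man, q via woman: forbidden path
        have hq' : Q q := (hsingle q hq.1).resolve_left h2
        have hp' : ¬ Q p := fun h => hp.2 ⟨h1, h⟩
        simp only [dif_pos h1, dif_neg h2, dif_pos hq'] at hpq
        exfalso
        apply hpath
        refine ⟨q.1, p.1, q.2, p.2, ?_, ?_, ?_, ?_, ?_⟩
        · simpa using hq.1
        · simpa using hp.1
        · have := h1.choose_spec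
          have h2' : h1.choose = q.2 := (Prod.ext_iff.mp hpq).2
          rwa [h2'] at this
        · intro w hw; exact h2 ⟨w, hw⟩
        · intro m hm; exact hp' ⟨m, hm⟩
      · -- symmetric
        have hp'' : Q p := (hsingle p hp.1).resolve_left h1
        have hq' : ¬ Q q := fun h => hq.2 ⟨h2, h⟩
        simp only [dif_neg h1, dif_pos hp'', dif_pos h2] at hpq
        exfalso
        apply hpath
        refine ⟨p.1, q.1, p.2, q.2, ?_, ?_, ?_, ?_, ?_⟩
        · simpa using hp.1
        · simpa using hq.1
        · have := h2.choose_spec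
          have h2' : h2.choose = p.2 := ((Prod.ext_iff.mp hpq).2).symm
          rwa [h2'] at this
        · intro w hw; exact h1 ⟨w, hw⟩
        · intro m hm; exact hq' ⟨m, hm⟩
      · have hp'' : Q p := (hsingle p hp.1).resolve_left h1
        have hq'' : Q q := (hsingle q hq.1).resolve_left h2
        simp only [dif_neg h1, dif_pos hp'', dif_neg h2, dif_pos hq''] at hpq
        exact hN2 p hp.1 q hq.1 ((Prod.ext_iff.mp hpq).2)
  -- Counting: the three filters together cover N twice
  have h1 : N.filter P ∪ N.filter Q = N := by
    rw [← Finset.filter_or]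
    exact Finset.filter_true_of_mem (fun p hp => hsingle p hp)
  have h2 : N.filter P ∩ N.filter Q = N.filter (fun p => P p ∧ Q p) :=
    (Finset.filter_and _ _ _).symm
  have h3 := Finset.card_union_add_card_inter (N.filter P) (N.filter Q)
  rw [h1, h2] at h3
  have h4 := Finset.card_filter_add_card_filter_not
    (s := N) (p := fun p => P p ∧ Q p)
  omega
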